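/- (Stationarity.) Consider an imprecise Markov chain with initial model E_1 := Q(·|□) and lower transition operator T, and assume T is Perron–Frobenius-like with stationary lower expectation E_∞. Call the chain stationary if E(f) = E(θf) for every extended real variable f : Ω → ℝ ∪ {−∞,+∞}, where (θf)(ω) := f(θω) and θω := (ω_2, ω_3, …) is the shifted path. Then the chain is stationary if and only if E_1(h) = E_∞(h) for every h : 𝒳 → ℝ. -/

import Mathlib

open Filter Topology

namespace IP

/-- A situation of length `n`: a tuple of the first `n` states. -/
abbrev Sit (𝒳 : ℕ → Type) (n : ℕ) := (i : Fin n) → 𝒳 i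

/-- A path: an infinite sequence of states. -/
abbrev Path (𝒳 : ℕ → Type) := (i : ℕ) → 𝒳 i

/-- The initial segment `ω^n` of a path. -/
def res {𝒳 : ℕ → Type} (ω : Path 𝒳) (n : ℕ) : Sit 𝒳 n := fun i => ω i

/-- The initial (empty) situation `□`. -/
def emptySit {𝒳 : ℕ → Type} : Sit 𝒳 0 := fun i => i.elim0

/-- Append a next state to a situation. -/
def snoc {𝒳 : ℕ → Type} {n : ℕ} (s : Sit 𝒳 n) (x : 𝒳 n) : Sit 𝒳 (n + 1) := fun i =>
  if h : (i : ℕ) < n then s ⟨i, h⟩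
  else cast (congrArg 𝒳 (Nat.le_antisymm (Nat.le_of_not_lt h) (Nat.lt_succ_iff.mp i.isLt))) x

/-- Truncate a situation of length `n` to its first `k` states. -/
def trunc {𝒳 : ℕ → Type} {n : ℕ} (s : Sit 𝒳 n) (k : ℕ) (h : k ≤ n) : Sit 𝒳 k :=
  fun i => s ⟨i, lt_of_lt_of_le i.isLt h⟩

/-- A (coherent) lower expectation on a nonempty finite set. -/
def IsLE {Y : Type} [Fintype Y] [Nonempty Y] (E : (Y → ℝ) → ℝ) : Prop :=
  (∀ f : Y → ℝ, (⨅ y, f y) ≤ E f) ∧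
  (∀ f g : Y → ℝ, E f + E g ≤ E (fun y => f y + g y)) ∧
  (∀ (f : Y → ℝ) (c : ℝ), 0 ≤ c → E (fun y => c * f y) = c * E f)

/-- Submartingale w.r.t. the local models `Q` of an imprecise probability tree. -/
def IsSubmartingale {𝒳 : ℕ → Type} (Q : ∀ n, Sit 𝒳 n → (𝒳 n → ℝ) → ℝ)
    (F : ∀ n, Sit 𝒳 n → ℝ) : Prop :=
  ∀ (n : ℕ) (s : Sit 𝒳 n), 0 ≤ Q n s (fun x => F (n + 1) (snoc s x) - F n s)

/-- Supermartingale: `-F` is a submartingale. -/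
def IsSupermartingale {𝒳 : ℕ → Type} (Q : ∀ n, Sit 𝒳 n → (𝒳 n → ℝ) → ℝ)
    (F : ∀ n, Sit 𝒳 n → ℝ) : Prop :=
  IsSubmartingale Q (fun n s => -F n s)

/-- A test supermartingale: nonnegative, starting at 1. -/
def IsTestSupermartingale {𝒳 : ℕ → Type} (Q : ∀ n, Sit 𝒳 n → (𝒳 n → ℝ) → ℝ)
    (F : ∀ n, Sit 𝒳 n → ℝ) : Prop :=
  IsSupermartingale Q F ∧ (∀ n s, 0 ≤ F n s) ∧ F 0 emptySit = 1

/-- An event is strictly null if some test supermartingale converges to `+∞` on it. -/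
def StrictlyNull {𝒳 : ℕ → Type} (Q : ∀ n, Sit 𝒳 n → (𝒳 n → ℝ) → ℝ)
    (A : Set (Path 𝒳)) : Prop :=
  ∃ F : ∀ n, Sit 𝒳 n → ℝ, IsTestSupermartingale Q F ∧
    ∀ ω ∈ A, Tendsto (fun n => F n (res ω n)) atTop atTop

/-- `limsup_n F(ω^n)` as an extended real. -/
noncomputable def pathLimsup {𝒳 : ℕ → Type} (F : ∀ n, Sit 𝒳 n → ℝ) (ω : Path 𝒳) : EReal :=
  Filter.limsup (fun n => (F n (res ω n) : EReal)) atTop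

/-- `liminf_n F(ω^n)` as an extended real. -/
noncomputable def pathLiminf {𝒳 : ℕ → Type} (F : ∀ n, Sit 𝒳 n → ℝ) (ω : Path 𝒳) : EReal :=
  Filter.liminf (fun n => (F n (res ω n) : EReal)) atTop

/-- A real process bounded above. -/
def BddAbv {𝒳 : ℕ → Type} (F : ∀ n, Sit 𝒳 n → ℝ) : Prop := ∃ B : ℝ, ∀ n s, F n s ≤ B

/-- A real process bounded below. -/
def BddBlw {𝒳 : ℕ → Type} (F : ∀ n, Sit 𝒳 n → ℝ) : Prop := ∃ B : ℝ, ∀ n s, B ≤ F n s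

/-- Conditional global lower expectation `E(f|s)` of an extended real variable. -/
noncomputable def lexp {𝒳 : ℕ → Type} (Q : ∀ n, Sit 𝒳 n → (𝒳 n → ℝ) → ℝ) {n : ℕ}
    (s : Sit 𝒳 n) (f : Path 𝒳 → EReal) : EReal :=
  sSup ((fun F : ∀ k, Sit 𝒳 k → ℝ => (F n s : EReal)) ''
    {F : ∀ k, Sit 𝒳 k → ℝ | IsSubmartingale Q F ∧ BddAbv F ∧
      ∀ ω : Path 𝒳, res ω n = s → pathLimsup F ω ≤ f ω})

/-- Conditional global upper expectation `Ē(f|s)`. -/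
noncomputable def uexp {𝒳 : ℕ → Type} (Q : ∀ n, Sit 𝒳 n → (𝒳 n → ℝ) → ℝ) {n : ℕ}
    (s : Sit 𝒳 n) (f : Path 𝒳 → EReal) : EReal :=
  - lexp Q s (fun ω => - f ω)

/-- The local models of a (time-homogeneous) imprecise Markov chain with initial model `E1`
and transition models `QT`. -/
def markovQ {X : Type} (E1 : (X → ℝ) → ℝ) (QT : X → (X → ℝ) → ℝ) :
    ∀ n, Sit (fun _ => X) n → (X → ℝ) → ℝ
  | 0, _ => E1
  | n + 1, s => QT (s ⟨n, Nat.lt_succ_self n⟩)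

/-- Prefix a path with a situation (fixed state space). -/
def prependX {X : Type} {n : ℕ} (s : Sit (fun _ => X) n) (ω : ℕ → X) : ℕ → X :=
  fun i => if h : i < n then s ⟨i, h⟩ else ω (i - n)

/-- Extension of a lower transition operator to extended real maps. -/
noncomputable def Text {X : Type} (T : (X → ℝ) → X → ℝ) (g : X → EReal) : X → EReal :=
  fun x => sSup ((fun h : X → ℝ => (T h x : EReal)) '' {h : X → ℝ | ∀ y, (h y : EReal) ≤ g y})

/-- The variation (semi)norm `max h - min h`. -/
noncomputable def varnorm {X : Type} [Fintype X] [Nonempty X] (h : X → ℝ) : ℝ :=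
  (⨆ x, h x) - ⨅ x, h x

/-- The (weak) coefficient of ergodicity of a lower transition operator. -/
noncomputable def coeff {X : Type} [Fintype X] [Nonempty X] (S : (X → ℝ) → X → ℝ) : ℝ :=
  sSup {v : ℝ | ∃ h : X → ℝ, (∀ x, 0 ≤ h x ∧ h x ≤ 1) ∧ v = varnorm (S h)}

/-- Extend a situation to a path, arbitrarily. -/
noncomputable def extend {𝒳 : ℕ → Type} [∀ k, Nonempty (𝒳 k)] {n : ℕ} (t : Sit 𝒳 n) :
    Path 𝒳 :=
  fun i => if h : i < n then t ⟨i, h⟩ else Classical.arbitrary (𝒳 i)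


/-! ### Auxiliary lemmas -/

section Aux

variable {X : Type}

lemma cast_self {α : Type} (h : α = α) (x : α) : cast h x = x := rfl

lemma snoc_app {n : ℕ} (s : Sit (fun _ => X) n) (x : X) (i : Fin (n+1)) :
    snoc s x i = if h : (i : ℕ) < n then s ⟨i, h⟩ else x := by
  unfold snoc
  split
  · rfl
  · exact cast_self _ _

lemma snoc_last {n : ℕ} (s : Sit (fun _ => X) n) (x : X) (hn : n < n + 1) :
    snoc s x ⟨n, hn⟩ = x := by
  rw [snoc_app]
  simp

lemma snoc_lt {n : ℕ} (s : Sit (fun _ => X) n) (x : X) (i : Fin (n+1)) (h : (i:ℕ) < n) :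
    snoc s x i = s ⟨i, h⟩ := by
  rw [snoc_app, dif_pos h]

lemma sit0_eq (s : Sit (fun _ => X) 0) : s = emptySit := by
  funext i; exact i.elim0

lemma res_snoc (ω : Path (fun _ => X)) (n : ℕ) :
    res ω (n+1) = snoc (res ω n) (ω n) := by
  funext i
  rw [snoc_app]
  split
  · rfl
  · next h =>
    have hi : (i : ℕ) = n := Nat.le_antisymm (Nat.lt_succ_iff.mp i.isLt) (Nat.le_of_not_lt h)
    show ω i = ω n
    rw [hi]

lemma trunc_res (ω : Path (fun _ => X)) (k n : ℕ) (h : n ≤ k) :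
    trunc (res ω k) n h = res ω n := rfl

lemma trunc_refl {n : ℕ} (s : Sit (fun _ => X) n) (h : n ≤ n) : trunc s n h = s := rfl

lemma trunc_trunc {n j k : ℕ} (s : Sit (fun _ => X) n) (hj : j ≤ n) (hk : k ≤ j) :
    trunc (trunc s j hj) k hk = trunc s k (le_trans hk hj) := rfl

lemma trunc_snoc {k n : ℕ} (t : Sit (fun _ => X) k) (x : X) (h : n ≤ k) (h' : n ≤ k + 1) :
    trunc (snoc t x) n h' = trunc t n h := by
  funext i
  show snoc t x ⟨i, _⟩ = t ⟨i, _⟩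
  rw [snoc_app]
  exact dif_pos (lt_of_lt_of_le i.isLt h)

lemma trunc_snoc_self {n : ℕ} (t : Sit (fun _ => X) n) (x : X) (h : n ≤ n + 1) :
    trunc (snoc t x) n h = t := by
  rw [trunc_snoc t x le_rfl h, trunc_refl]

lemma snoc_idx {k n : ℕ} (t : Sit (fun _ => X) k) (x : X) (h : n < k) (h' : n < k + 1) :
    snoc t x ⟨n, h'⟩ = t ⟨n, h⟩ := by
  rw [snoc_app]
  exact dif_pos h

end Aux
namespace IsLE

variable {Y : Type} [Fintype Y] [Nonempty Y] {E : (Y → ℝ) → ℝ}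

lemma nonneg (hE : IsLE E) {f : Y → ℝ} (hf : ∀ y, 0 ≤ f y) : 0 ≤ E f :=
  le_trans (le_ciInf hf) (hE.1 f)

lemma zero (hE : IsLE E) : E (fun _ => 0) = 0 := by
  have h1 : (0:ℝ) ≤ E fun _ => 0 := hE.nonneg (fun _ => le_refl 0)
  have h2 := hE.2.1 (fun _ => 0) (fun _ => 0)
  simp only [add_zero] at h2
  linarith

lemma mono (hE : IsLE E) {f g : Y → ℝ} (hfg : ∀ y, f y ≤ g y) : E f ≤ E g := by
  have h := hE.2.1 f (fun y => g y - f y)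
  have h2 : 0 ≤ E (fun y => g y - f y) := hE.nonneg (fun y => by linarith [hfg y])
  have h3 : (fun y => f y + (g y - f y)) = g := by funext y; ring
  rw [h3] at h
  linarith

lemma const_le (hE : IsLE E) (c : ℝ) : E (fun _ => c) = c := by
  have h1 : c ≤ E (fun _ => c) := le_trans (le_of_eq (ciInf_const).symm) (hE.1 _)
  have h2 := hE.2.1 (fun _ => c) (fun _ => -c)
  have h3 : (-c : ℝ) ≤ E (fun _ => -c) := le_trans (le_of_eq (ciInf_const).symm) (hE.1 _)
  have h4 : (fun (_ : Y) => c + -c) = (fun _ => (0:ℝ)) := by funext y; ring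
  rw [h4, hE.zero] at h2
  linarith

lemma add_const (hE : IsLE E) (f : Y → ℝ) (c : ℝ) : E (fun y => f y + c) = E f + c := by
  have h1 := hE.2.1 f (fun _ => c)
  rw [hE.const_le] at h1
  have h2 := hE.2.1 (fun y => f y + c) (fun _ => -c)
  rw [hE.const_le] at h2
  have h3 : (fun y => f y + c + -c) = f := by funext y; ring
  rw [h3] at h2
  linarith

lemma exists_le (hE : IsLE E) (f : Y → ℝ) : ∃ y, E f ≤ f y := by
  obtain ⟨y0, hy0⟩ := Finite.exists_max f
  exact ⟨y0, le_trans (hE.mono (fun y => hy0 y)) (le_of_eq (hE.const_le _))⟩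

end IsLE

lemma ereal_le_of_forall (a : ℝ) (b : EReal) (h : ∀ ε : ℝ, 0 < ε → ((a - ε : ℝ) : EReal) ≤ b) :
    (a : EReal) ≤ b := by
  induction b with
  | bot =>
    exfalso
    have := h 1 one_pos
    rw [le_bot_iff] at this
    exact EReal.coe_ne_bot _ this
  | coe c =>
    rw [EReal.coe_le_coe_iff]
    by_contra hc
    push_neg at hc
    have := h ((a - c)/2) (by linarith)
    rw [EReal.coe_le_coe_iff] at this
    linarith
  | top => exact le_top

lemma exists_mem_near {a : ℝ} {S : Set EReal} (h : (a : EReal) ≤ sSup S) {ε : ℝ} (hε : 0 < ε) :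
    ∃ b ∈ S, ((a - ε : ℝ) : EReal) < b := by
  have hlt : ((a - ε : ℝ) : EReal) < sSup S :=
    lt_of_lt_of_le (EReal.coe_lt_coe_iff.mpr (by linarith)) h
  exact lt_sSup_iff.mp hlt

section Markov

variable {X : Type} [Fintype X] [Nonempty X]

/-- The local models of a Markov chain are all lower expectations. -/
lemma markovQ_isLE {E1 : (X → ℝ) → ℝ} {QT : X → (X → ℝ) → ℝ}
    (hE1 : IsLE E1) (hQT : ∀ x, IsLE (QT x)) :
    ∀ (n : ℕ) (s : Sit (fun _ => X) n), IsLE (markovQ E1 QT n s) := by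
  intro n s
  cases n with
  | zero => exact hE1
  | succ n => exact hQT _

/-- A submartingale satisfies `F(s) ≤ Q(F(s·))`. -/
lemma sub_step {Q : ∀ n, Sit (fun _ => X) n → (X → ℝ) → ℝ}
    (hQ : ∀ n s, IsLE (Q n s)) {F : ∀ n, Sit (fun _ => X) n → ℝ}
    (hF : IsSubmartingale Q F) (n : ℕ) (s : Sit (fun _ => X) n) :
    F n s ≤ Q n s (fun x => F (n+1) (snoc s x)) := by
  have h0 := hF n s
  have h1 : (fun x => F (n+1) (snoc s x) - F n s)
      = (fun x => F (n+1) (snoc s x) + (-(F n s))) := by funext x; ring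
  rw [h1, (hQ n s).add_const] at h0
  linarith

end Markov
section Greedy

variable {X : Type} [Fintype X] [Nonempty X]
variable {Q : ∀ n, Sit (fun _ => X) n → (X → ℝ) → ℝ}

/-- Greedy path: along some path extending `s`, a submartingale stays above its value at `s`. -/
lemma exists_path_limsup (hQ : ∀ n s, IsLE (Q n s)) {F : ∀ n, Sit (fun _ => X) n → ℝ}
    (hF : IsSubmartingale Q F) (n : ℕ) (s : Sit (fun _ => X) n) :
    ∃ ω : Path (fun _ => X), res ω n = s ∧ (F n s : EReal) ≤ pathLimsup F ω := by
  have step : ∀ (k : ℕ) (t : Sit (fun _ => X) k), ∃ x, F k t ≤ F (k+1) (snoc t x) := by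
    intro k t
    have h0 := hF k t
    obtain ⟨x0, hx0⟩ := (hQ k t).exists_le (fun x => F (k+1) (snoc t x) - F k t)
    exact ⟨x0, by linarith⟩
  choose pick hpick using step
  let sits : (k : ℕ) → Sit (fun _ => X) (n + k) :=
    fun k => Nat.rec (motive := fun k => Sit (fun _ => X) (n + k)) s
      (fun k t => snoc t (pick (n + k) t)) k
  have sits_succ : ∀ k, sits (k+1) = snoc (sits k) (pick (n+k) (sits k)) := fun k => rfl
  have mono : ∀ k, F n s ≤ F (n + k) (sits k) := by
    intro k
    induction k with
    | zero => exact le_rfl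
    | succ k ih => exact le_trans ih (hpick (n + k) (sits k))
  have compat : ∀ k k', k ≤ k' → ∀ (i : ℕ) (hi : i < n + k) (hi' : i < n + k'),
      sits k' ⟨i, hi'⟩ = sits k ⟨i, hi⟩ := by
    intro k k' hkk'
    induction k' , hkk' using Nat.le_induction with
    | base => intro i hi hi'; rfl
    | succ k' hkk' ih =>
      intro i hi hi'
      rw [sits_succ, snoc_lt _ _ _ (show ((⟨i, hi'⟩ : Fin (n + k' + 1)) : ℕ) < n + k' by
        exact lt_of_lt_of_le hi (by omega))]
      exact ih i hi _
  set ω : Path (fun _ => X) := fun i => sits (i+1) ⟨i, by omega⟩ with hω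
  have res_eq : ∀ k, res ω (n + k) = sits k := by
    intro k
    funext i
    show sits ((i : ℕ) + 1) ⟨(i : ℕ), by omega⟩ = sits k i
    rcases le_total k ((i : ℕ) + 1) with h | h
    · rw [compat k ((i:ℕ)+1) h (i : ℕ) i.isLt (by omega)]
    · rw [compat ((i:ℕ)+1) k h (i : ℕ) (by omega) i.isLt]
  refine ⟨ω, ?_, ?_⟩
  · exact res_eq 0
  · apply le_limsup_of_frequently_le
    · apply Filter.Eventually.frequently
      rw [Filter.eventually_atTop]
      refine ⟨n, fun m hm => ?_⟩
      obtain ⟨k, rfl⟩ : ∃ k, m = n + k := ⟨m - n, by omega⟩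
      rw [res_eq k]
      exact EReal.coe_le_coe_iff.mpr (mono k)
    · exact Filter.isBoundedUnder_of ⟨⊤, fun m => le_top⟩

/-- `lexp` of a variable that is constant on the cylinder. -/
lemma lexp_const_cyl (hQ : ∀ n s, IsLE (Q n s)) (n : ℕ) (s : Sit (fun _ => X) n)
    (f : Path (fun _ => X) → EReal) (c : ℝ)
    (hf : ∀ ω, res ω n = s → f ω = (c : EReal)) : lexp Q s f = (c : EReal) := by
  apply le_antisymm
  · apply sSup_le
    rintro b ⟨F, ⟨hFs, hFb, hFl⟩, rfl⟩
    obtain ⟨ω, hωs, hle⟩ := exists_path_limsup hQ hFs n s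
    calc ((F n s : ℝ) : EReal) ≤ pathLimsup F ω := hle
      _ ≤ f ω := hFl ω hωs
      _ = (c : EReal) := hf ω hωs
  · apply le_sSup
    refine ⟨fun _ _ => c, ⟨?_, ⟨c, fun _ _ => le_rfl⟩, ?_⟩, rfl⟩
    · intro k t
      have h1 : (fun x => c - c) = (fun (_ : X) => (0:ℝ)) := by funext x; ring
      rw [h1, (hQ k t).zero]
    · intro ω hωs
      rw [hf ω hωs]
      unfold pathLimsup
      rw [limsup_const]

end Greedy

section RealExt

/-- The `sSup`-extension of a lower expectation agrees with it on real-valued maps. -/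
lemma realext {Y : Type} [Fintype Y] [Nonempty Y] {E : (Y → ℝ) → ℝ} (hE : IsLE E) (g : Y → ℝ) :
    sSup ((fun h : Y → ℝ => ((E h : ℝ) : EReal)) ''
      {h : Y → ℝ | ∀ y, ((h y : ℝ) : EReal) ≤ ((g y : ℝ) : EReal)}) = ((E g : ℝ) : EReal) := by
  apply le_antisymm
  · apply sSup_le
    rintro b ⟨h, hh, rfl⟩
    exact EReal.coe_le_coe_iff.mpr (hE.mono (fun y => EReal.coe_le_coe_iff.mp (hh y)))
  · exact le_sSup ⟨g, fun y => le_rfl, rfl⟩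

end RealExt
section LIE

variable {X : Type} [Fintype X] [Nonempty X]
variable {Q : ∀ n, Sit (fun _ => X) n → (X → ℝ) → ℝ}

open Classical in
/-- Law of iterated (lower) expectation for the global models. -/
lemma lexp_LIE (hQ : ∀ n s, IsLE (Q n s)) (n : ℕ) (s : Sit (fun _ => X) n)
    (f : Path (fun _ => X) → EReal) :
    lexp Q s f = sSup ((fun h : X → ℝ => ((Q n s h : ℝ) : EReal)) ''
      {h : X → ℝ | ∀ x, ((h x : ℝ) : EReal) ≤ lexp Q (snoc s x) f}) := by
  apply le_antisymm
  · -- ≤ : every eligible submartingale is dominated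
    apply sSup_le
    rintro b ⟨F, ⟨hFs, hFb, hFl⟩, rfl⟩
    have hmem : (fun x => F (n+1) (snoc s x)) ∈
        {h : X → ℝ | ∀ x, ((h x : ℝ) : EReal) ≤ lexp Q (snoc s x) f} := by
      intro x
      apply le_sSup
      refine ⟨F, ⟨hFs, hFb, ?_⟩, rfl⟩
      intro ω hω
      apply hFl
      have h2 := congrArg (fun t => trunc t n (Nat.le_succ n)) hω
      simp only [trunc_res, trunc_snoc_self] at h2
      exact h2
    refine le_trans (EReal.coe_le_coe_iff.mpr (sub_step hQ hFs n s)) ?_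
    exact le_sSup ⟨_, hmem, rfl⟩
  · -- ≥ : glue near-optimal submartingales
    apply sSup_le
    rintro b ⟨h, hh, rfl⟩
    apply ereal_le_of_forall
    intro ε hε
    have hchoose : ∀ x : X, ∃ F : ∀ k, Sit (fun _ => X) k → ℝ,
        (IsSubmartingale Q F ∧ BddAbv F ∧
          ∀ ω, res ω (n+1) = snoc s x → pathLimsup F ω ≤ f ω) ∧
        h x - ε < F (n+1) (snoc s x) := by
      intro x
      obtain ⟨b, hb, hlt⟩ := exists_mem_near (hh x) hε
      obtain ⟨F, hF, rfl⟩ := hb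
      exact ⟨F, hF, EReal.coe_lt_coe_iff.mp hlt⟩
    choose Fx hFx hFxval using hchoose
    choose B hB using fun x => (hFx x).2.1
    set m : ℝ := Q n s h - ε with hm
    set C : ℝ := Q n s h with hC
    set G : ∀ k, Sit (fun _ => X) k → ℝ := fun k t =>
      if hk : k ≤ n then (if t = trunc s k hk then m else C)
      else if ht : trunc t n (by omega) = s then Fx (t ⟨n, by omega⟩) k t else C
      with hG
    have hmC : m ≤ C := by rw [hm, hC]; linarith
    -- value of G at on-track situations of length ≤ n is m
    have hGlow : ∀ (k : ℕ) (hk : k ≤ n) (t : Sit (fun _ => X) k),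
        G k t = if t = trunc s k hk then m else C := fun k hk t => dif_pos hk
    have hGhigh : ∀ (k : ℕ) (hk : n < k) (t : Sit (fun _ => X) k),
        G k t = if trunc t n (le_of_lt hk) = s then Fx (t ⟨n, hk⟩) k t else C := by
      intro k hk t
      rw [hG]
      simp only
      rw [dif_neg (by omega)]
      split
      · rfl
      · rfl
    -- G is a submartingale
    have hGsub : IsSubmartingale Q G := by
      intro k t
      rcases lt_trichotomy k n with hkn | rfl | hkn
      · -- k < n
        rw [hGlow k (le_of_lt hkn) t]
        split
        · next h1 =>
          apply (hQ k t).nonneg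
          intro x
          rw [hGlow (k+1) hkn (snoc t x)]
          split
          · simp
          · simp [sub_nonneg]; exact hmC
        · next h1 =>
          have hall : ∀ x, G (k+1) (snoc t x) = C := by
            intro x
            rw [hGlow (k+1) hkn (snoc t x)]
            rw [if_neg]
            intro hcon
            apply h1
            have := congrArg (fun u => trunc u k (Nat.le_succ k)) hcon
            simp only [trunc_snoc_self, trunc_trunc] at this
            exact this
          have : (fun x => G (k+1) (snoc t x) - C) = (fun _ => (0:ℝ)) := by
            funext x; rw [hall x]; ring
          rw [this, (hQ k t).zero]
      · -- k = n (after substitution the common length is `k`)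
        rw [hGlow k le_rfl t]
        split
        · next h1 =>
          rw [trunc_refl] at h1
          subst h1
          have hsucc : ∀ x, G (k+1) (snoc t x) = Fx x (k+1) (snoc t x) := by
            intro x
            rw [hGhigh (k+1) (Nat.lt_succ_self k) (snoc t x),
              if_pos (trunc_snoc_self t x _), snoc_last]
          have hge : ∀ x, h x - Q k t h ≤ G (k+1) (snoc t x) - m := by
            intro x
            rw [hsucc x, hm, hC]
            have h2 := hFxval x
            linarith
          have h3 : Q k t (fun x => h x - Q k t h) = 0 := by
            have h4 : (fun x => h x - Q k t h) = (fun x => h x + -(Q k t h)) := by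
              funext x; ring
            rw [h4, (hQ k t).add_const]
            ring
          rw [← h3]
          exact (hQ k t).mono hge
        · next h1 =>
          have hall : ∀ x, G (k+1) (snoc t x) = C := by
            intro x
            rw [hGhigh (k+1) (Nat.lt_succ_self k) (snoc t x), if_neg]
            intro hcon
            apply h1
            rw [trunc_snoc_self t x _] at hcon
            rw [trunc_refl]
            exact hcon
          have heq0 : (fun x => G (k+1) (snoc t x) - C) = (fun _ => (0:ℝ)) := by
            funext x
            rw [hall x]
            ring
          rw [heq0, (hQ k t).zero]
      · -- n < k
        rw [hGhigh k hkn t]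
        split
        · next h1 =>
          have hkey : (fun x => G (k+1) (snoc t x) - Fx (t ⟨n, hkn⟩) k t)
              = (fun x => Fx (t ⟨n, hkn⟩) (k+1) (snoc t x) - Fx (t ⟨n, hkn⟩) k t) := by
            funext x
            rw [hGhigh (k+1) (Nat.lt_succ_of_lt hkn) (snoc t x),
              if_pos (by rw [trunc_snoc t x (le_of_lt hkn) _]; exact h1),
              snoc_idx t x hkn]
          rw [hkey]
          exact (hFx (t ⟨n, hkn⟩)).1 k t
        · next h1 =>
          have hall : ∀ x, G (k+1) (snoc t x) = C := by
            intro x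
            rw [hGhigh (k+1) (Nat.lt_succ_of_lt hkn) (snoc t x), if_neg]
            rw [trunc_snoc t x (le_of_lt hkn) _]
            exact h1
          have : (fun x => G (k+1) (snoc t x) - C) = (fun _ => (0:ℝ)) := by
            funext x; rw [hall x]; ring
          rw [this, (hQ k t).zero]
    -- G is bounded above
    have hGbdd : BddAbv G := by
      refine ⟨max C (max m (Finset.univ.sup' Finset.univ_nonempty B)), ?_⟩
      intro k t
      rcases le_or_gt k n with hk | hk
      · rw [hGlow k hk t]
        split
        · exact le_max_of_le_right (le_max_left _ _)
        · exact le_max_left _ _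
      · rw [hGhigh k hk t]
        split
        · refine le_max_of_le_right (le_max_of_le_right ?_)
          exact le_trans (hB _ k t) (Finset.le_sup' B (Finset.mem_univ _))
        · exact le_max_left _ _
    -- the limsup condition
    have hGlim : ∀ ω, res ω n = s → pathLimsup G ω ≤ f ω := by
      intro ω hωs
      have hev : pathLimsup G ω = pathLimsup (Fx (ω n)) ω := by
        unfold pathLimsup
        apply Filter.limsup_congr
        rw [Filter.eventually_atTop]
        refine ⟨n+1, fun k hk => ?_⟩
        congr 1
        rw [hGhigh k (by omega) (res ω k)]
        rw [if_pos]
        · rfl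
        · show trunc (res ω k) n _ = s
          rw [trunc_res]; exact hωs
      rw [hev]
      apply (hFx (ω n)).2.2
      rw [res_snoc, hωs]
    have hval : G n s = m := by
      rw [hGlow n le_rfl s, if_pos]
      rw [trunc_refl]
    have hfin : ((G n s : ℝ) : EReal) ≤ sSup ((fun F : ∀ k, Sit (fun _ => X) k → ℝ =>
        ((F n s : ℝ) : EReal)) '' {F : ∀ k, Sit (fun _ => X) k → ℝ | IsSubmartingale Q F ∧
        BddAbv F ∧ ∀ ω : Path (fun _ => X), res ω n = s → pathLimsup F ω ≤ f ω}) :=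
      le_sSup ⟨G, ⟨hGsub, hGbdd, hGlim⟩, rfl⟩
    rw [hval] at hfin
    rw [hm, hC] at hfin
    exact hfin

end LIE
section ShiftDefs

variable {X : Type}

/-- Drop the first state of a situation. -/
def shiftSit {n : ℕ} (t : Sit (fun _ => X) (n+1)) : Sit (fun _ => X) n :=
  fun i => t i.succ

/-- Prepend a state to a situation. -/
def consSit {n : ℕ} (x : X) (t : Sit (fun _ => X) n) : Sit (fun _ => X) (n+1) :=
  fun i => Fin.cases x (fun j => t j) i

/-- Prepend a state to a path. -/
def consPath (x : X) (ω : Path (fun _ => X)) : Path (fun _ => X) :=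
  fun i => Nat.casesOn i x ω

lemma shiftSit_snoc {n : ℕ} (t : Sit (fun _ => X) (n+1)) (z : X) :
    shiftSit (snoc t z) = snoc (shiftSit t) z := by
  funext i
  show snoc t z i.succ = snoc (shiftSit t) z i
  rw [snoc_app, snoc_app]
  by_cases h : (i : ℕ) < n
  · rw [dif_pos h, dif_pos (show ((i.succ : Fin (n+2)) : ℕ) < n + 1 by simp; omega)]
    show t _ = t _
    congr 1
  · rw [dif_neg h, dif_neg (show ¬ ((i.succ : Fin (n+2)) : ℕ) < n + 1 by simp; omega)]

lemma shiftSit_res (ω : Path (fun _ => X)) (k : ℕ) :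
    shiftSit (res ω (k+1)) = res (fun i => ω (i+1)) k := rfl

lemma consSit_snoc {n : ℕ} (x : X) (t : Sit (fun _ => X) n) (z : X) :
    consSit x (snoc t z) = snoc (consSit x t) z := by
  funext i
  induction i using Fin.cases with
  | zero =>
    show x = snoc (consSit x t) z 0
    rw [snoc_app]
    rw [dif_pos (show ((0 : Fin (n+2)) : ℕ) < n + 1 by simp)]
    rfl
  | succ j =>
    show snoc t z j = snoc (consSit x t) z j.succ
    rw [snoc_app, snoc_app]
    by_cases h : (j : ℕ) < n
    · rw [dif_pos h, dif_pos (show ((j.succ : Fin (n+2)) : ℕ) < n + 1 by simp; omega)]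
      show t _ = consSit x t _
      have : ((⟨(j : ℕ) + 1, by omega⟩ : Fin (n+1))) = (⟨(j : ℕ), h⟩ : Fin n).succ := by
        apply Fin.ext; simp
      show t _ = consSit x t ⟨(j:ℕ)+1, by omega⟩
      rw [this]
      rfl
    · rw [dif_neg h, dif_neg (show ¬ ((j.succ : Fin (n+2)) : ℕ) < n + 1 by simp; omega)]

lemma consSit_res (x : X) (ω : Path (fun _ => X)) (k : ℕ) :
    consSit x (res ω k) = res (consPath x ω) (k+1) := by
  funext i
  induction i using Fin.cases with
  | zero => rfl
  | succ j => rfl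

end ShiftDefs

section Shift

variable {X : Type} [Fintype X] [Nonempty X]
variable {E1 : (X → ℝ) → ℝ} {QT : X → (X → ℝ) → ℝ}

/-- Time-shift invariance of the conditional global lower expectations of a Markov chain. -/
lemma lexp_shift (hE1 : IsLE E1) (hQT : ∀ x, IsLE (QT x)) (x y : X)
    (f : Path (fun _ => X) → EReal) :
    lexp (markovQ E1 QT) (snoc (snoc emptySit x) y) (fun ω => f (fun i => ω (i + 1)))
      = lexp (markovQ E1 QT) (snoc emptySit y) f := by
  have hQ := markovQ_isLE hE1 hQT
  apply le_antisymm
  · -- from G eligible at (x,y) for θf build F eligible at (y) for f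
    apply sSup_le
    rintro b ⟨G, ⟨hGs, hGb, hGl⟩, rfl⟩
    apply le_sSup
    set m : ℝ := ⨅ z, G 2 (consSit x (snoc emptySit z)) with hm
    set F : ∀ k, Sit (fun _ => X) k → ℝ := fun k =>
      Nat.casesOn (motive := fun k => Sit (fun _ => X) k → ℝ) k
        (fun _ => m) (fun j t => G (j+2) (consSit x t)) with hF
    have hFsub : IsSubmartingale (markovQ E1 QT) F := by
      intro k t
      cases k with
      | zero =>
        have ht := sit0_eq t
        subst ht
        apply (hQ 0 emptySit).nonneg
        intro z
        show 0 ≤ G 2 (consSit x (snoc emptySit z)) - m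
        have := ciInf_le (f := fun z => G 2 (consSit x (snoc emptySit z)))
          (Set.Finite.bddBelow (Set.finite_range _)) z
        rw [hm]
        linarith [this]
      | succ j =>
        have hfun : (fun z => F (j+2) (snoc t z) - F (j+1) t)
            = (fun z => G (j+3) (snoc (consSit x t) z) - G (j+2) (consSit x t)) := by
          funext z
          show G (j+3) (consSit x (snoc t z)) - G (j+2) (consSit x t) = _
          rw [consSit_snoc]
        show 0 ≤ QT (t ⟨j, Nat.lt_succ_self j⟩) (fun z => F (j+2) (snoc t z) - F (j+1) t)
        rw [hfun]
        exact hGs (j+2) (consSit x t)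
    have hFbdd : BddAbv F := by
      obtain ⟨B, hB⟩ := hGb
      refine ⟨max B m, ?_⟩
      intro k t
      cases k with
      | zero => exact le_max_right _ _
      | succ j => exact le_max_of_le_left (hB _ _)
    have hFlim : ∀ ω : Path (fun _ => X), res ω 1 = snoc emptySit y →
        pathLimsup F ω ≤ f ω := by
      intro ω hω
      have hω0 : ω 0 = y := by
        have h0 := congrFun hω ⟨0, one_pos⟩
        rw [snoc_app] at h0
        simpa [res] using h0
      have e0 : snoc (snoc (emptySit (𝒳 := fun _ => X)) x) y (⟨0, two_pos⟩ : Fin 2) = x := by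
        rw [snoc_app, dif_pos (show (0:ℕ) < 1 by norm_num), snoc_app,
          dif_neg (show ¬ (0:ℕ) < 0 by norm_num)]
      have e1 : snoc (snoc (emptySit (𝒳 := fun _ => X)) x) y (⟨1, one_lt_two⟩ : Fin 2) = y := by
        rw [snoc_app, dif_neg (show ¬ (1:ℕ) < 1 by norm_num)]
      have hres2 : res (consPath x ω) 2 = snoc (snoc emptySit x) y := by
        funext i
        have hi : (i:ℕ) = 0 ∨ (i:ℕ) = 1 := by omega
        rcases hi with hi | hi
        · have hii : i = (⟨0, two_pos⟩ : Fin 2) := Fin.ext hi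
          subst hii
          exact e0.symm
        · have hii : i = (⟨1, one_lt_two⟩ : Fin 2) := Fin.ext hi
          subst hii
          exact (hω0.trans e1.symm : ω 0 = _)
      have hlim := hGl (consPath x ω) hres2
      have hsl : pathLimsup F ω = pathLimsup G (consPath x ω) := by
        unfold pathLimsup
        have h1 : ∀ j : ℕ, F (j+1) (res ω (j+1)) = G (j+2) (res (consPath x ω) (j+2)) := by
          intro j
          show G (j+2) (consSit x (res ω (j+1))) = _
          rw [consSit_res]
        calc Filter.limsup (fun k => ((F k (res ω k) : ℝ) : EReal)) atTop
            = Filter.limsup (fun k => ((F (k+1) (res ω (k+1)) : ℝ) : EReal)) atTop :=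
              (Filter.limsup_nat_add (fun k => ((F k (res ω k) : ℝ) : EReal)) 1).symm
          _ = Filter.limsup
                (fun k => ((G (k+2) (res (consPath x ω) (k+2)) : ℝ) : EReal)) atTop := by
              apply Filter.limsup_congr
              exact Filter.Eventually.of_forall (fun k => by rw [h1 k])
          _ = _ := Filter.limsup_nat_add
                (fun k => ((G k (res (consPath x ω) k) : ℝ) : EReal)) 2
      rw [hsl]
      exact hlim
    refine ⟨F, ⟨hFsub, hFbdd, hFlim⟩, ?_⟩
    have hce : consSit x (emptySit (𝒳 := fun _ => X)) = snoc emptySit x := by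
      funext i
      have hii : i = (⟨0, one_pos⟩ : Fin 1) := Fin.ext (by omega)
      subst hii
      rw [snoc_app, dif_neg (show ¬ (0:ℕ) < 0 by norm_num)]
      rfl
    show ((G 2 (consSit x (snoc emptySit y)) : ℝ) : EReal) = _
    rw [consSit_snoc, hce]
  · -- from F eligible at (y) for f build G eligible at (x,y) for θf
    apply sSup_le
    rintro b ⟨F, ⟨hFs, hFb, hFl⟩, rfl⟩
    apply le_sSup
    set m : ℝ := ⨅ z, F 1 (snoc emptySit z) with hm
    set G : ∀ k, Sit (fun _ => X) k → ℝ := fun k =>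
      Nat.casesOn (motive := fun k => Sit (fun _ => X) k → ℝ) k (fun _ => m)
        (fun j => Nat.casesOn (motive := fun j => Sit (fun _ => X) (j+1) → ℝ) j
          (fun _ => m) (fun i t => F (i+1) (shiftSit t))) with hG
    have hGsub : IsSubmartingale (markovQ E1 QT) G := by
      intro k t
      cases k with
      | zero =>
        have hfun : (fun z => G 1 (snoc t z) - G 0 t) = (fun (_ : X) => (0:ℝ)) := by
          funext z; show m - m = 0; ring
        show 0 ≤ markovQ E1 QT 0 t (fun z => G 1 (snoc t z) - G 0 t)
        rw [hfun, (hQ 0 t).zero]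
      | succ j =>
       cases j with
       | zero =>
        have hfun : (fun z => G 2 (snoc t z) - G 1 t)
            = (fun z => F 1 (snoc emptySit z) - m) := by
          funext z
          show F 1 (shiftSit (snoc t z)) - m = _
          rw [shiftSit_snoc, sit0_eq (shiftSit t)]
        show 0 ≤ markovQ E1 QT 1 t (fun z => G 2 (snoc t z) - G 1 t)
        rw [hfun]
        apply (hQ 1 t).nonneg
        intro z
        have := ciInf_le (f := fun z => F 1 (snoc emptySit z))
          (Set.Finite.bddBelow (Set.finite_range _)) z
        rw [hm]
        linarith [this]
       | succ j =>
        have hfun : (fun z => G (j+3) (snoc t z) - G (j+2) t)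
            = (fun z => F (j+2) (snoc (shiftSit t) z) - F (j+1) (shiftSit t)) := by
          funext z
          show F (j+2) (shiftSit (snoc t z)) - F (j+1) (shiftSit t) = _
          rw [shiftSit_snoc]
        show 0 ≤ QT (t ⟨j+1, Nat.lt_succ_self (j+1)⟩)
          (fun z => G (j+3) (snoc t z) - G (j+2) t)
        rw [hfun]
        exact hFs (j+1) (shiftSit t)
    have hGbdd : BddAbv G := by
      obtain ⟨B, hB⟩ := hFb
      refine ⟨max B m, ?_⟩
      intro k t
      cases k with
      | zero => exact le_max_right _ _
      | succ j =>
        cases j with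
        | zero => exact le_max_right _ _
        | succ i => exact le_max_of_le_left (hB _ _)
    have hGlim : ∀ ω : Path (fun _ => X), res ω 2 = snoc (snoc emptySit x) y →
        pathLimsup G ω ≤ f (fun i => ω (i+1)) := by
      intro ω hω
      have e1 : snoc (snoc (emptySit (𝒳 := fun _ => X)) x) y (⟨1, one_lt_two⟩ : Fin 2) = y := by
        rw [snoc_app, dif_neg (show ¬ (1:ℕ) < 1 by norm_num)]
      have hω1 : ω 1 = y := by
        have h0 := congrFun hω (⟨1, one_lt_two⟩ : Fin 2)
        exact h0.trans e1
      have ey : snoc (emptySit (𝒳 := fun _ => X)) y (⟨0, one_pos⟩ : Fin 1) = y := by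
        rw [snoc_app, dif_neg (show ¬ (0:ℕ) < 0 by norm_num)]
      have hres1 : res (fun i => ω (i+1)) 1 = snoc emptySit y := by
        funext i
        have hii : i = (⟨0, one_pos⟩ : Fin 1) := Fin.ext (by omega)
        subst hii
        exact (hω1.trans ey.symm : ω 1 = _)
      have hlim := hFl (fun i => ω (i+1)) hres1
      have hsl : pathLimsup G ω = pathLimsup F (fun i => ω (i+1)) := by
        unfold pathLimsup
        have h1 : ∀ j : ℕ, G (j+2) (res ω (j+2)) = F (j+1) (res (fun i => ω (i+1)) (j+1)) := by
          intro j
          show F (j+1) (shiftSit (res ω (j+2))) = _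
          rw [shiftSit_res]
        calc Filter.limsup (fun k => ((G k (res ω k) : ℝ) : EReal)) atTop
            = Filter.limsup (fun k => ((G (k+2) (res ω (k+2)) : ℝ) : EReal)) atTop :=
              (Filter.limsup_nat_add (fun k => ((G k (res ω k) : ℝ) : EReal)) 2).symm
          _ = Filter.limsup
                (fun k => ((F (k+1) (res (fun i => ω (i+1)) (k+1)) : ℝ) : EReal)) atTop := by
              apply Filter.limsup_congr
              exact Filter.Eventually.of_forall (fun k => by rw [h1 k])
          _ = _ := Filter.limsup_nat_add
                (fun k => ((F k (res (fun i => ω (i+1)) k) : ℝ) : EReal)) 1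
      rw [hsl]
      exact hlim
    refine ⟨G, ⟨hGsub, hGbdd, hGlim⟩, ?_⟩
    show ((F 1 (shiftSit (snoc (snoc emptySit x) y)) : ℝ) : EReal) = _
    rw [shiftSit_snoc, sit0_eq (shiftSit (snoc emptySit x))]

end Shift
section Comp

variable {X : Type} [Fintype X] [Nonempty X]

/-- If `E1` is `T`-invariant, then its extension is invariant under the extended `T`. -/
lemma ext_comp {E1 : (X → ℝ) → ℝ} {T : (X → ℝ) → X → ℝ}
    (hE1 : IsLE E1) (hT : ∀ x : X, IsLE (fun h => T h x))
    (hinv : ∀ h : X → ℝ, E1 (fun x => T h x) = E1 h) (g : X → EReal) :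
    sSup ((fun h : X → ℝ => ((E1 h : ℝ) : EReal)) ''
        {h : X → ℝ | ∀ x, ((h x : ℝ) : EReal) ≤ Text T g x})
      = sSup ((fun h : X → ℝ => ((E1 h : ℝ) : EReal)) ''
        {h : X → ℝ | ∀ x, ((h x : ℝ) : EReal) ≤ g x}) := by
  apply le_antisymm
  · apply sSup_le
    rintro b ⟨k, hk, rfl⟩
    apply ereal_le_of_forall
    intro ε hε
    have hchoose : ∀ x : X, ∃ hx : X → ℝ, (∀ y, ((hx y : ℝ) : EReal) ≤ g y) ∧
        k x - ε < T hx x := by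
      intro x
      obtain ⟨b, hb, hlt⟩ := exists_mem_near (hk x) hε
      obtain ⟨hx, hhx, rfl⟩ := hb
      exact ⟨hx, hhx, EReal.coe_lt_coe_iff.mp hlt⟩
    choose hx hhx hlt using hchoose
    set H : X → ℝ := fun y => Finset.univ.sup' Finset.univ_nonempty (fun x => hx x y) with hH
    have hHg : ∀ y, ((H y : ℝ) : EReal) ≤ g y := by
      intro y
      obtain ⟨x0, _, hx0⟩ := Finset.exists_mem_eq_sup' Finset.univ_nonempty (fun x => hx x y)
      rw [hH]
      simp only
      rw [hx0]
      exact hhx x0 y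
    have hTH : ∀ x, k x - ε ≤ T H x := by
      intro x
      refine le_trans (le_of_lt (hlt x)) ((hT x).mono (fun y => ?_))
      exact Finset.le_sup' (fun x' => hx x' y) (Finset.mem_univ x)
    have h1 : E1 k - ε ≤ E1 H := by
      have h2 : E1 (fun x => k x - ε) ≤ E1 (fun x => T H x) := hE1.mono hTH
      have h3 : (fun x => k x - ε) = (fun x => k x + (-ε)) := by funext x; ring
      rw [h3, hE1.add_const, hinv H] at h2
      linarith
    refine le_trans (EReal.coe_le_coe_iff.mpr h1) ?_
    exact le_sSup ⟨H, hHg, rfl⟩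
  · apply sSup_le
    rintro b ⟨h, hh, rfl⟩
    have hmem : (fun x => T h x) ∈ {h : X → ℝ | ∀ x, ((h x : ℝ) : EReal) ≤ Text T g x} := by
      intro x
      exact le_sSup ⟨h, hh, rfl⟩
    refine le_trans (le_of_eq ?_) (le_sSup ⟨fun x => T h x, hmem, rfl⟩)
    exact_mod_cast congrArg _ (hinv h).symm

end Comp

section Main

variable {X : Type} [Fintype X] [Nonempty X]

lemma Einf_T {T : (X → ℝ) → X → ℝ} {Einf : (X → ℝ) → ℝ}
    (hPF : ∀ (h : X → ℝ) (x : X), Tendsto (fun n => (T^[n] h) x) atTop (nhds (Einf h)))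
    (h : X → ℝ) : Einf (T h) = Einf h := by
  have x0 : X := Classical.arbitrary X
  have h1 : Tendsto (fun n => (T^[n] (T h)) x0) atTop (nhds (Einf (T h))) := hPF (T h) x0
  have h2 : Tendsto (fun n => (T^[n] (T h)) x0) atTop (nhds (Einf h)) := by
    have h3 : (fun n => (T^[n] (T h)) x0) = (fun n => (T^[n+1] h) x0) := by
      funext n
      rw [Function.iterate_succ_apply]
    rw [h3]
    exact (hPF h x0).comp (tendsto_add_atTop_nat 1)
  exact tendsto_nhds_unique h1 h2

lemma E1_tendsto {E1 : (X → ℝ) → ℝ} {T : (X → ℝ) → X → ℝ} {Einf : (X → ℝ) → ℝ}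
    (hE1 : IsLE E1)
    (hPF : ∀ (h : X → ℝ) (x : X), Tendsto (fun n => (T^[n] h) x) atTop (nhds (Einf h)))
    (h : X → ℝ) : Tendsto (fun n => E1 (T^[n] h)) atTop (nhds (Einf h)) := by
  rw [Metric.tendsto_atTop]
  intro ε hε
  have hev : ∀ᶠ n in atTop, ∀ x : X, dist ((T^[n] h) x) (Einf h) < ε / 2 := by
    rw [eventually_all]
    intro x
    exact (hPF h x).eventually (Metric.ball_mem_nhds _ (by linarith))
  rw [Filter.eventually_atTop] at hev
  obtain ⟨N, hN⟩ := hev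
  refine ⟨N, fun n hn => ?_⟩
  have hub : E1 (T^[n] h) ≤ Einf h + ε / 2 := by
    refine le_trans (hE1.mono (g := fun _ => Einf h + ε / 2) (fun x => ?_))
      (le_of_eq (hE1.const_le _))
    have := hN n hn x
    rw [Real.dist_eq, abs_lt] at this
    linarith [this.2]
  have hlb : Einf h - ε / 2 ≤ E1 (T^[n] h) := by
    refine le_trans (le_of_eq (hE1.const_le _).symm)
      (hE1.mono (f := fun _ => Einf h - ε / 2) (fun x => ?_))
    have := hN n hn x
    rw [Real.dist_eq, abs_lt] at this
    linarith [this.1]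
  rw [Real.dist_eq, abs_lt]
  constructor <;> linarith

end Main
/-- Stationarity: the chain is stationary iff its initial model is the stationary lower
expectation. -/
theorem stationarity {X : Type} [Fintype X] [Nonempty X]
    (E1 : (X → ℝ) → ℝ) (T : (X → ℝ) → X → ℝ)
    (hE1 : IsLE E1) (hT : ∀ x : X, IsLE (fun h => T h x))
    (Einf : (X → ℝ) → ℝ)
    (hPF : ∀ (h : X → ℝ) (x : X), Tendsto (fun n => (T^[n] h) x) atTop (nhds (Einf h))) :
    (∀ f : Path (fun _ => X) → EReal,
        lexp (markovQ E1 (fun x h => T h x)) emptySit f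
          = lexp (markovQ E1 (fun x h => T h x)) emptySit (fun ω => f (fun i => ω (i + 1))))
      ↔ (∀ h : X → ℝ, E1 h = Einf h) := by
  set Q := markovQ E1 (fun x h => T h x) with hQdef
  have hQ : ∀ (n : ℕ) (s : Sit (fun _ => X) n), IsLE (Q n s) := markovQ_isLE hE1 hT
  -- specialized laws of iterated expectation
  have LIE0 : ∀ f : Path (fun _ => X) → EReal,
      lexp Q emptySit f = sSup ((fun k : X → ℝ => ((E1 k : ℝ) : EReal)) ''
        {k : X → ℝ | ∀ x, ((k x : ℝ) : EReal) ≤ lexp Q (snoc emptySit x) f}) :=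
    fun f => lexp_LIE hQ 0 emptySit f
  have LIE1 : ∀ (x : X) (f : Path (fun _ => X) → EReal),
      lexp Q (snoc emptySit x) f = sSup ((fun k : X → ℝ => ((T k x : ℝ) : EReal)) ''
        {k : X → ℝ | ∀ y, ((k y : ℝ) : EReal) ≤ lexp Q (snoc (snoc emptySit x) y) f}) :=
    fun x f => lexp_LIE hQ 1 (snoc emptySit x) f
  -- value at a cylinder variable depending only on the first coordinate
  have hA : ∀ (g : X → ℝ) (x : X),
      lexp Q (snoc emptySit x) (fun ω => ((g (ω 0) : ℝ) : EReal)) = ((g x : ℝ) : EReal) := by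
    intro g x
    apply lexp_const_cyl hQ 1 (snoc emptySit x)
    intro ω hω
    have h0 := congrFun hω ⟨0, one_pos⟩
    rw [snoc_app, dif_neg (show ¬ (0:ℕ) < 0 by norm_num)] at h0
    have h0' : ω 0 = x := h0
    show ((g (ω 0) : ℝ) : EReal) = ((g x : ℝ) : EReal)
    rw [h0']
  constructor
  · -- stationarity implies E1 = Einf
    intro hstat h
    have hinv : ∀ g : X → ℝ, E1 (fun x => T g x) = E1 g := by
      intro g
      have hf0 := hstat (fun ω => ((g (ω 0) : ℝ) : EReal))
      have hL : lexp Q emptySit (fun ω => ((g (ω 0) : ℝ) : EReal)) = ((E1 g : ℝ) : EReal) := by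
        rw [LIE0]
        simp only [hA g]
        exact realext hE1 g
      have hB : ∀ x : X, lexp Q (snoc emptySit x)
          (fun ω => ((g (ω (0+1)) : ℝ) : EReal)) = ((T g x : ℝ) : EReal) := by
        intro x
        have hsh : ∀ y : X, lexp Q (snoc (snoc emptySit x) y)
            (fun ω => ((g (ω (0+1)) : ℝ) : EReal)) =
            lexp Q (snoc emptySit y) (fun ω => ((g (ω 0) : ℝ) : EReal)) :=
          fun y => lexp_shift hE1 hT x y (fun ω => ((g (ω 0) : ℝ) : EReal))
        rw [LIE1 x]
        simp only [hsh, hA g]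
        exact realext (hT x) g
      have hR : lexp Q emptySit (fun ω => ((g (ω (0+1)) : ℝ) : EReal))
          = ((E1 (fun x => T g x) : ℝ) : EReal) := by
        rw [LIE0]
        simp only [hB]
        exact realext hE1 (fun x => T g x)
      have hf0' : ((E1 g : ℝ) : EReal) = ((E1 (fun x => T g x) : ℝ) : EReal) := by
        rw [← hL, ← hR]
        exact hf0
      exact_mod_cast hf0'.symm
    have hconst : ∀ n : ℕ, E1 (T^[n] h) = E1 h := by
      intro n
      induction n with
      | zero => rfl
      | succ n ih =>
        rw [Function.iterate_succ_apply']
        exact (hinv (T^[n] h)).trans ih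
    have ht := E1_tendsto hE1 hPF h
    have heq : (fun n => E1 (T^[n] h)) = (fun _ => E1 h) := funext hconst
    rw [heq] at ht
    exact tendsto_nhds_unique tendsto_const_nhds ht
  · -- E1 = Einf implies stationarity
    intro hEinf f
    have hinv : ∀ g : X → ℝ, E1 (fun x => T g x) = E1 g := by
      intro g
      calc E1 (fun x => T g x) = Einf (T g) := hEinf (T g)
        _ = Einf g := Einf_T hPF g
        _ = E1 g := (hEinf g).symm
    rw [LIE0 f, LIE0 (fun ω => f (fun i => ω (i + 1)))]
    have hsh : ∀ x : X, lexp Q (snoc emptySit x) (fun ω => f (fun i => ω (i + 1)))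
        = Text T (fun y => lexp Q (snoc emptySit y) f) x := by
      intro x
      have hs2 : ∀ y : X, lexp Q (snoc (snoc emptySit x) y) (fun ω => f (fun i => ω (i + 1)))
          = lexp Q (snoc emptySit y) f := fun y => lexp_shift hE1 hT x y f
      rw [LIE1 x]
      simp only [hs2]
      rfl
    simp only [hsh]
    exact (ext_comp hE1 hT hinv (fun y => lexp Q (snoc emptySit y) f)).symm

end IP
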